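/- Let $a_1 \in R$ and $p_{i,j} \in R$ ($i \le j$) be elements of a commutative ring, and define $a_{n+1} = \sum_{i=1}^n p_{i,n} a_i$ for $n \ge 1$. Let $A_n$ be the $n \times n$ upper Hessenberg matrix with entries $(A_n)_{i,j} = p_{i,j}$ for $i \le j$, $(A_n)_{i+1,i} = -1$, and $0$ elsewhere. Then $a_{n+1} = a_1 \det A_n$ for all $n \ge 1$. -/

import Mathlib

/-- Theorem 1: for a sequence defined by `a_{n+1} = ∑_{i=1}^n p_{i,n} a_i` in a
commutative ring, `a_{n+1} = a_1 · det A_n` where `A_n` is the upper Hessenberg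
matrix with entries `p_{i,j}` for `i ≤ j` and `-1` on the subdiagonal. -/
theorem hessenberg_det_of_recurrence {R : Type*} [CommRing R]
    (a : ℕ → R) (p : ℕ → ℕ → R)
    (ha : ∀ n, 1 ≤ n → a (n + 1) = ∑ i ∈ Finset.Icc 1 n, p i n * a i)
    (A : (n : ℕ) → Matrix (Fin n) (Fin n) R)
    (hA : ∀ n (i j : Fin n), A n i j =
      if (i : ℕ) ≤ (j : ℕ) then p ((i : ℕ) + 1) ((j : ℕ) + 1)
      else if (i : ℕ) = (j : ℕ) + 1 then -1 else 0) :
    ∀ n, 1 ≤ n → a (n + 1) = a 1 * (A n).det := by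
  intro n hn
  obtain ⟨m, rfl⟩ : ∃ m, n = m + 1 := ⟨n - 1, by omega⟩
  set M : Matrix (Fin (m + 1)) (Fin (m + 1)) R := A (m + 1) with hM
  set x : Fin (m + 1) → R := fun i => a ((i : ℕ) + 1) with hxdef
  -- Step 1: Matrix.vecMul x M is a(m+2) at the last coordinate, 0 elsewhere
  have hx : Matrix.vecMul x M = Pi.single (Fin.last m) (a (m + 2)) := by
    funext j
    have hvm : (Matrix.vecMul x M) j = ∑ i : Fin (m + 1), a ((i : ℕ) + 1) * M i j := rfl
    rw [hvm]
    have hMij : ∀ i : Fin (m + 1), a ((i : ℕ) + 1) * M i j =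
        (if (i : ℕ) ≤ (j : ℕ) then p ((i : ℕ) + 1) ((j : ℕ) + 1) * a ((i : ℕ) + 1) else 0)
        + (if (i : ℕ) = (j : ℕ) + 1 then -a ((i : ℕ) + 1) else 0) := by
      intro i
      rw [hM, hA]
      split_ifs with h1 h2
      · omega
      · ring
      · ring
      · ring
    rw [Finset.sum_congr rfl fun i _ => hMij i, Finset.sum_add_distrib]
    have e1 : (∑ i : Fin (m + 1),
        (if (i : ℕ) ≤ (j : ℕ) then p ((i : ℕ) + 1) ((j : ℕ) + 1) * a ((i : ℕ) + 1) else 0))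
        = a ((j : ℕ) + 2) := by
      rw [Fin.sum_univ_eq_sum_range
        (fun i => if i ≤ (j : ℕ) then p (i + 1) ((j : ℕ) + 1) * a (i + 1) else 0)]
      rw [← Finset.sum_filter]
      have hfilter : (Finset.range (m + 1)).filter (fun i => i ≤ (j : ℕ))
          = Finset.range ((j : ℕ) + 1) := by
        ext i
        simp only [Finset.mem_filter, Finset.mem_range]
        omega
      rw [hfilter]
      have hrec := ha ((j : ℕ) + 1) (by omega)
      rw [show Finset.Icc 1 ((j : ℕ) + 1)
          = (Finset.range ((j : ℕ) + 1)).map ⟨fun i => i + 1, fun a b h => by simpa using h⟩ by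
        ext k
        simp only [Finset.mem_map, Finset.mem_range, Finset.mem_Icc,
          Function.Embedding.coeFn_mk]
        exact ⟨fun h => ⟨k - 1, by omega, by show k - 1 + 1 = k; omega⟩,
          fun ⟨b, hb, hbk⟩ => by have : b + 1 = k := hbk; omega⟩] at hrec
      rw [Finset.sum_map] at hrec
      exact hrec.symm
    have e2 : (∑ i : Fin (m + 1),
        (if (i : ℕ) = (j : ℕ) + 1 then -a ((i : ℕ) + 1) else 0))
        = if (j : ℕ) + 1 ∈ Finset.range (m + 1) then -a ((j : ℕ) + 2) else 0 := by
      rw [Fin.sum_univ_eq_sum_range (fun i => if i = (j : ℕ) + 1 then -a (i + 1) else 0)]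
      exact Finset.sum_ite_eq' _ _ _
    rw [e1, e2]
    rcases eq_or_ne j (Fin.last m) with hj | hj
    · subst hj
      simp [Fin.val_last]
    · have hjm : (j : ℕ) < m := by
        have := j.isLt
        have : (j : ℕ) ≠ m := fun h => hj (Fin.ext h)
        omega
      rw [Pi.single_apply, if_neg hj, if_pos (by simp [Finset.mem_range]; omega)]
      ring
  -- Step 3 (aux): the relevant adjugate entry is 1
  have adjOne : Matrix.adjugate M (Fin.last m) 0 = 1 := by
    rw [Matrix.adjugate_apply]
    set N : Matrix (Fin (m + 1)) (Fin (m + 1)) R :=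
      M.updateRow 0 (Pi.single (Fin.last m) 1) with hN
    have hEntry : ∀ i j : Fin (m + 1),
        N.submatrix (finRotate (m + 1)) id i j = N (i + 1) j := by
      intro i j
      simp [Matrix.submatrix_apply, finRotate_succ_apply]
    have hBT : (N.submatrix (finRotate (m + 1)) id).BlockTriangular id := by
      intro i j hij
      simp only [id_eq] at hij
      rw [hEntry]
      rcases eq_or_ne i (Fin.last m) with hi | hi
      · subst hi
        rw [show (Fin.last m + 1 : Fin (m + 1)) = 0 by
          rw [← finRotate_succ_apply, finRotate_last]]
        rw [hN, Matrix.updateRow_self, Pi.single_apply,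
          if_neg (ne_of_lt (hij : j < Fin.last m))]
      · have hlt : i < Fin.last m := lt_of_le_of_ne (Fin.le_last i) hi
        have hval : ((i + 1 : Fin (m + 1)) : ℕ) = (i : ℕ) + 1 := Fin.val_add_one_of_lt hlt
        have hne : (i + 1 : Fin (m + 1)) ≠ 0 := by
          intro h
          rw [h] at hval
          simp at hval
        rw [hN, Matrix.updateRow_ne hne, hM, hA]
        rw [hval]
        have hij' : (j : ℕ) < (i : ℕ) := hij
        rw [if_neg (by omega), if_neg (by omega)]
    have hdiag : ∀ i : Fin m,
        N.submatrix (finRotate (m + 1)) id i.castSucc i.castSucc = -1 := by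
      intro i
      rw [hEntry]
      have hlt : i.castSucc < Fin.last m := Fin.castSucc_lt_last i
      have hval : ((i.castSucc + 1 : Fin (m + 1)) : ℕ) = (i.castSucc : ℕ) + 1 :=
        Fin.val_add_one_of_lt hlt
      have hne : (i.castSucc + 1 : Fin (m + 1)) ≠ 0 := by
        intro h
        rw [h] at hval
        simp at hval
      rw [hN, Matrix.updateRow_ne hne, hM, hA, hval]
      rw [if_neg (by omega), if_pos rfl]
    have hlast : N.submatrix (finRotate (m + 1)) id (Fin.last m) (Fin.last m) = 1 := by
      rw [hEntry]
      rw [show (Fin.last m + 1 : Fin (m + 1)) = 0 by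
        rw [← finRotate_succ_apply, finRotate_last]]
      rw [hN, Matrix.updateRow_self, Pi.single_apply, if_pos rfl]
    have hdet : (N.submatrix (finRotate (m + 1)) id).det = (-1 : R) ^ m := by
      rw [Matrix.det_of_upperTriangular hBT, Fin.prod_univ_castSucc]
      rw [hlast, mul_one, Finset.prod_congr rfl fun i _ => hdiag i]
      simp
    have hperm := Matrix.det_permute (finRotate (m + 1)) N
    rw [hdet, sign_finRotate] at hperm
    have hperm' : (-1 : R) ^ m = (-1 : R) ^ m * N.det :=
      hperm.trans (by push_cast; ring)
    have hsq : ((-1 : R) ^ m) * ((-1 : R) ^ m) = 1 := by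
      rw [← pow_add, ← two_mul, pow_mul]
      norm_num
    calc N.det = (((-1 : R) ^ m) * ((-1 : R) ^ m)) * N.det := by rw [hsq, one_mul]
      _ = ((-1 : R) ^ m) * (((-1 : R) ^ m) * N.det) := by ring
      _ = ((-1 : R) ^ m) * ((-1 : R) ^ m) := by rw [← hperm']
      _ = 1 := hsq
  -- Step 2: combine via the adjugate
  have h3 : Matrix.vecMul (Matrix.vecMul x M) (Matrix.adjugate M) = M.det • x := by
    rw [Matrix.vecMul_vecMul, Matrix.mul_adjugate]
    funext j
    simp [Matrix.vecMul, dotProduct, Matrix.one_apply, mul_comm,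
      Finset.sum_ite_eq', mul_ite]
  rw [hx] at h3
  have h4 := congrFun h3 0
  rw [Matrix.single_vecMul] at h4
  simp only [Pi.smul_apply, smul_eq_mul, Matrix.row_apply] at h4
  rw [adjOne, mul_one] at h4
  have hx0 : x 0 = a 1 := by simp [hxdef]
  rw [hx0] at h4
  rw [show m + 1 + 1 = m + 2 from rfl, h4, mul_comm]
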